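/- Let f : [0,1] → ℝ be a convex function and let a, b ∈ [0,1] with a ≥ b, and set ε := a − b. Then (f(a) − f(b)) − (f(1−b) − f(1−a)) ≤ (f(1) − f(1−ε)) − (f(ε) − f(0)). Consequently, for d = 2 and any probability vectors p = (a, 1−a), q = (b, 1−b) with ε = |a−b|, D_f(p,q) ≤ Δ_{f;2}(ε). -/

import Mathlib

lemma incr_mono_aux (f : ℝ → ℝ) (hf : ConvexOn ℝ (Set.Icc 0 1) f)
    {x y e : ℝ} (hx : 0 ≤ x) (hxy : x ≤ y) (he : 0 ≤ e) (hy : y + e ≤ 1) :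
    f (x + e) + f y ≤ f x + f (y + e) := by
  rcases eq_or_lt_of_le (by linarith : (0:ℝ) ≤ y - x + e) with h0 | h0
  · have hxy' : x = y := by linarith [he, hxy, h0.symm ▸ (by linarith : y - x + e = 0)]
    have he' : e = 0 := by linarith
    simp [hxy', he']
  · set D := y - x + e with hD
    have hxm : x ∈ Set.Icc (0:ℝ) 1 := ⟨hx, by linarith⟩
    have hym : y + e ∈ Set.Icc (0:ℝ) 1 := ⟨by linarith, hy⟩
    have ht : (0:ℝ) ≤ e / D := div_nonneg he h0.le
    have hs : (0:ℝ) ≤ (y - x) / D := div_nonneg (by linarith) h0.le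
    have h1 : (1 - e / D) + e / D = 1 := by ring
    have h2 : (1 - (y - x) / D) + (y - x) / D = 1 := by ring
    have ht1 : e / D ≤ 1 := by
      rw [div_le_one h0]; linarith
    have hs1 : (y - x) / D ≤ 1 := by
      rw [div_le_one h0]; linarith
    have c1 := hf.2 hxm hym (by linarith : (0:ℝ) ≤ 1 - e / D) ht h1
    have c2 := hf.2 hxm hym (by linarith : (0:ℝ) ≤ 1 - (y - x) / D) hs h2
    have e1 : (1 - e / D) • x + (e / D) • (y + e) = x + e := by
      simp only [smul_eq_mul]
      field_simp [h0.ne']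
      rw [hD]; ring
    have e2 : (1 - (y - x) / D) • x + ((y - x) / D) • (y + e) = y := by
      simp only [smul_eq_mul]
      field_simp [h0.ne']
      rw [hD]; ring
    rw [e1] at c1
    rw [e2] at c2
    simp only [smul_eq_mul] at c1 c2
    have hS : e / D + (y - x) / D = 1 := by
      rw [← add_div]
      field_simp [hD]
      ring
    have hR : (1 - e / D) * f x + (e / D) * f (y + e) +
        ((1 - (y - x) / D) * f x + ((y - x) / D) * f (y + e)) = f x + f (y + e) := by
      linear_combination (f (y + e) - f x) * hS
    linarith [add_le_add c1 c2]

theorem dim_two_case (f : ℝ → ℝ) (hf_conv : ConvexOn ℝ (Set.Icc 0 1) f)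
    (a b : ℝ) (ha : a ∈ Set.Icc (0 : ℝ) 1) (hb : b ∈ Set.Icc (0 : ℝ) 1)
    (hab : b ≤ a) (ε : ℝ) (hε : ε = a - b) :
    (f a - f b) - (f (1 - b) - f (1 - a)) ≤
      (f 1 - f (1 - ε)) - (f ε - f 0) ∧
    (f a + f (1 - a)) - (f b + f (1 - b)) ≤
      f 1 - f (1 - ε) - (f ε - f 0) := by
  obtain ⟨ha0, ha1⟩ := ha
  obtain ⟨hb0, hb1⟩ := hb
  have he : 0 ≤ ε := by linarith
  have h1 : f (b + ε) + f (1 - ε) ≤ f b + f ((1 - ε) + ε) :=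
    incr_mono_aux f hf_conv hb0 (by linarith) he (by linarith)
  have h2 : f (0 + ε) + f (1 - a) ≤ f 0 + f ((1 - a) + ε) :=
    incr_mono_aux f hf_conv le_rfl (by linarith) he (by linarith)
  have eb : b + ε = a := by linarith
  have e1 : (1 - ε) + ε = (1:ℝ) := by ring
  have e2 : (1 - a) + ε = 1 - b := by linarith
  have e3 : (0:ℝ) + ε = ε := by ring
  rw [eb, e1] at h1
  rw [e2, e3] at h2
  constructor <;> linarith
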